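/- ℓ1 concentration of the empirical distribution: let p be a probability distribution on a finite set of size S, let X_1,…,X_n be independent samples from p, and let p̂ be the empirical distribution p̂(x) := (1/n)·#{i : X_i = x}. Then for every δ ∈ (0,1), with probability at least 1 − δ, ‖p̂ − p‖_{ℓ1} ≤ 2·√(2(S·log 5 + log(1/δ))/n). -/

import Mathlib

open MeasureTheory Finset

lemma exp_le_chord (z l : ℝ) (hz : |z| ≤ 2) :
    Real.exp (l * z) ≤ (2 - z)/4 * Real.exp (-(2*l)) + (2 + z)/4 * Real.exp (2*l) := by
  obtain ⟨h1, h2⟩ := abs_le.mp hz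
  have ha : (0:ℝ) ≤ (2 - z)/4 := by linarith
  have hb : (0:ℝ) ≤ (2 + z)/4 := by linarith
  have hab : (2 - z)/4 + (2 + z)/4 = 1 := by ring
  have h := convexOn_exp.2 (Set.mem_univ (-(2*l))) (Set.mem_univ (2*l)) ha hb hab
  rw [smul_eq_mul, smul_eq_mul,
    show (2 - z)/4 * (-(2*l)) + (2 + z)/4 * (2*l) = l * z by ring] at h
  exact h

lemma mgf_coord {α : Type*} [Fintype α] [MeasurableSpace α] [MeasurableSingletonClass α]
    (μp : Measure α) [IsProbabilityMeasure μp] (Z : α → ℝ) (hZ : ∀ x, |Z x| ≤ 2)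
    (h0 : ∫ x, Z x ∂μp = 0) (l : ℝ) :
    ∫ x, Real.exp (l * Z x) ∂μp ≤ Real.exp (2 * l ^ 2) := by
  have hint : ∀ f : α → ℝ, Integrable f μp := fun f => .of_finite
  have step1 : ∫ x, Real.exp (l * Z x) ∂μp ≤
      ∫ x, ((2 - Z x)/4 * Real.exp (-(2*l)) + (2 + Z x)/4 * Real.exp (2*l)) ∂μp :=
    integral_mono (hint _) (hint _) fun x => exp_le_chord (Z x) l (hZ x)
  have step2 : ∫ x, ((2 - Z x)/4 * Real.exp (-(2*l)) + (2 + Z x)/4 * Real.exp (2*l)) ∂μp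
      = Real.cosh (2*l) := by
    rw [integral_add (hint _) (hint _), integral_mul_const, integral_mul_const,
      show (fun x => (2 - Z x)/4) = fun x => (1/4) * (2 - Z x) by funext x; ring,
      show (fun x => (2 + Z x)/4) = fun x => (1/4) * (2 + Z x) by funext x; ring,
      integral_const_mul, integral_const_mul, integral_sub (hint _) (hint _),
      integral_add (hint _) (hint _), h0, integral_const, Real.cosh_eq]
    simp
    ring
  calc ∫ x, Real.exp (l * Z x) ∂μp ≤ Real.cosh (2*l) := step2 ▸ step1
    _ ≤ Real.exp ((2*l)^2/2) := Real.cosh_le_exp_half_sq _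
    _ = Real.exp (2 * l^2) := by ring_nf

open Classical in
/-- **ℓ1 concentration of the empirical distribution.** Let `p` be a probability distribution
on a finite set of size `S` (formalized as a probability measure `μp` on a fintype `α` of
cardinality `S`) and let `X_1,…,X_n` be i.i.d. samples from `p` (formalized by the product
measure on `Fin n → α`). Then for every `δ ∈ (0,1)`, with probability at least `1 − δ`,
`‖p̂ − p‖₁ ≤ 2·√(2(S·log 5 + log(1/δ))/n)`, where `p̂` is the empirical distribution. -/
theorem empirical_l1_concentration {α : Type*} [Fintype α] [MeasurableSpace α]
    [MeasurableSingletonClass α]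
    (S n : ℕ) (hcard : Fintype.card α = S) (hn : 0 < n)
    (μp : Measure α) [IsProbabilityMeasure μp]
    (δ : ℝ) (hδ0 : 0 < δ) (hδ1 : δ < 1) :
    ENNReal.ofReal (1 - δ) ≤
      Measure.pi (fun _ : Fin n => μp)
        {ω : Fin n → α |
          ∑ x : α, |((Finset.univ.filter fun i : Fin n => ω i = x).card : ℝ) / (n : ℝ)
              - (μp {x}).toReal|
            ≤ 2 * Real.sqrt (2 * ((S : ℝ) * Real.log 5 + Real.log (1 / δ)) / (n : ℝ))} := by
  classical
  set μ : Measure (Fin n → α) := Measure.pi (fun _ : Fin n => μp) with hμdef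
  haveI : IsProbabilityMeasure μ := by rw [hμdef]; infer_instance
  set p : α → ℝ := fun x => (μp {x}).toReal with hpdef
  set t : ℝ := Real.sqrt (2 * ((S : ℝ) * Real.log 5 + Real.log (1 / δ)) / (n : ℝ)) with htdef
  set C : ℝ := (S : ℝ) * Real.log 5 + Real.log (1 / δ) with hCdef
  have hlogδ : 0 < Real.log (1 / δ) := by
    rw [one_div, Real.log_inv]
    linarith [Real.log_neg hδ0 hδ1]
  have hC : 0 < C := by
    have : (0:ℝ) ≤ (S : ℝ) * Real.log 5 :=
      mul_nonneg (Nat.cast_nonneg _) (Real.log_nonneg (by norm_num))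
    rw [hCdef]; linarith
  have hnpos : (0:ℝ) < n := by exact_mod_cast hn
  have ht2 : t ^ 2 = 2 * C / n := Real.sq_sqrt (by positivity)
  have ht : 0 < t := Real.sqrt_pos.2 (by positivity)
  have hintp : ∀ f : α → ℝ, Integrable f μp := fun f => .of_finite
  have hintn : ∀ f : (Fin n → α) → ℝ, Integrable f μ := fun f => .of_finite
  -- test vectors
  set v : (α → Bool) → α → ℝ := fun s x => if s x then 1 else -1 with hvdef
  set m : (α → Bool) → ℝ := fun s => ∫ x, v s x ∂μp with hmdef
  set g : (α → Bool) → (Fin n → α) → ℝ := fun s ω => ∑ i, (v s (ω i) - m s) with hgdef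
  set B : (α → Bool) → Set (Fin n → α) := fun s => {ω | 2 * n * t ≤ g s ω} with hBdef
  have hv1 : ∀ s x, |v s x| ≤ 1 := by
    intro s x; rw [hvdef]; dsimp only; split <;> norm_num
  have hm1 : ∀ s, |m s| ≤ 1 := by
    intro s
    calc |m s| = ‖∫ x, v s x ∂μp‖ := (Real.norm_eq_abs _).symm
      _ ≤ ∫ x, ‖v s x‖ ∂μp := norm_integral_le_integral_norm _
      _ ≤ ∫ _x, (1:ℝ) ∂μp := integral_mono (hintp _) (hintp _)
          (fun x => by rw [Real.norm_eq_abs]; exact hv1 s x)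
      _ = 1 := by simp
  have hZ2 : ∀ s x, |v s x - m s| ≤ 2 := fun s x =>
    (abs_sub _ _).trans (by linarith [hv1 s x, hm1 s])
  have hZ0 : ∀ s, ∫ x, (v s x - m s) ∂μp = 0 := by
    intro s
    rw [integral_sub (hintp _) (integrable_const _), integral_const]
    simp [hmdef]
  -- product structure of the mgf
  have hprod : ∀ (s : α → Bool) (l : ℝ),
      ∫ ω, Real.exp (l * g s ω) ∂μ = (∫ x, Real.exp (l * (v s x - m s)) ∂μp) ^ n := by
    intro s l
    letI : MeasureSpace α := ⟨μp⟩
    haveI : SigmaFinite (volume : Measure α) := (inferInstance : SigmaFinite μp)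
    have heq : ∀ ω : Fin n → α,
        Real.exp (l * g s ω) = ∏ i : Fin n, Real.exp (l * (v s (ω i) - m s)) := by
      intro ω
      rw [hgdef]; dsimp only
      rw [Finset.mul_sum, Real.exp_sum]
    simp_rw [heq]
    have h := MeasureTheory.integral_fintype_prod_eq_pow (ι := Fin n) (μ := μp)
      (fun x : α => Real.exp (l * (v s x - m s)))
    simpa [Fintype.card_fin] using h
  -- Chernoff bound for each test vector
  have hcher : ∀ s : α → Bool, (μ (B s)).toReal ≤ Real.exp (-C) := by
    intro s
    have h1 := ProbabilityTheory.measure_ge_le_exp_mul_mgf (μ := μ) (X := g s) (t := t/2)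
      (2 * n * t) (by positivity) (hintn _)
    rw [hBdef]
    refine h1.trans ?_
    have hmgf : ProbabilityTheory.mgf (g s) μ (t/2) ≤ Real.exp (2 * (t/2) ^ 2) ^ n := by
      rw [ProbabilityTheory.mgf, hprod s (t/2)]
      exact pow_le_pow_left₀ (integral_nonneg fun x => (Real.exp_pos _).le)
        (mgf_coord μp _ (hZ2 s) (hZ0 s) (t/2)) n
    calc Real.exp (-(t/2) * (2 * n * t)) * ProbabilityTheory.mgf (g s) μ (t/2)
        ≤ Real.exp (-(t/2) * (2 * n * t)) * Real.exp (2 * (t/2) ^ 2) ^ n := by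
          exact mul_le_mul_of_nonneg_left hmgf (Real.exp_pos _).le
      _ = Real.exp (-(n * t ^ 2) / 2) := by
          rw [← Real.exp_nat_mul, ← Real.exp_add]; ring_nf
      _ = Real.exp (-C) := by
          congr 1
          rw [ht2]
          field_simp
  -- inclusion of the bad event in the union
  have hsub : {ω : Fin n → α |
      ∑ x : α, |((Finset.univ.filter fun i : Fin n => ω i = x).card : ℝ) / (n : ℝ) - p x|
        ≤ 2 * t}ᶜ ⊆ ⋃ s : α → Bool, B s := by
    intro ω hω
    rw [Set.mem_compl_iff, Set.mem_setOf_eq, not_le] at hω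
    set emp : α → ℝ := fun x =>
      ((Finset.univ.filter fun i : Fin n => ω i = x).card : ℝ) / (n : ℝ) with hempdef
    set s : α → Bool := fun x => decide (p x ≤ emp x) with hsdef
    refine Set.mem_iUnion.2 ⟨s, ?_⟩
    rw [hBdef]
    show 2 * n * t ≤ g s ω
    have key : g s ω = n * ∑ x : α, |emp x - p x| := by
      rw [hgdef]; dsimp only
      rw [Finset.sum_sub_distrib, Finset.sum_const, Finset.card_univ, Fintype.card_fin,
        ← Finset.sum_fiberwise Finset.univ ω (fun i => v s (ω i))]
      have hfib : ∀ x : α, ∑ i ∈ Finset.univ.filter (fun i => ω i = x), v s (ω i)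
          = ((Finset.univ.filter fun i : Fin n => ω i = x).card : ℝ) * v s x := by
        intro x
        rw [Finset.sum_congr rfl (fun i hi => by
          rw [(Finset.mem_filter.mp hi).2]), Finset.sum_const, nsmul_eq_mul]
      simp_rw [hfib]
      have hmsum : m s = ∑ x : α, p x * v s x := by
        rw [hmdef]; dsimp only
        rw [integral_fintype]
        simp [hpdef, smul_eq_mul, Measure.real]
        exact hintp _
      rw [hmsum, Finset.smul_sum, Finset.mul_sum, ← Finset.sum_sub_distrib]
      refine Finset.sum_congr rfl fun x _ => ?_
      have hcount : ((Finset.univ.filter fun i : Fin n => ω i = x).card : ℝ) = n * emp x := by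
        rw [hempdef]; field_simp
      rw [nsmul_eq_mul, hcount]
      rcases le_or_gt (p x) (emp x) with h | h
      · have hs : v s x = 1 := by rw [hvdef, hsdef]; simp [h]
        rw [hs, abs_of_nonneg (by linarith)]; ring
      · have hs : v s x = -1 := by rw [hvdef, hsdef]; simp [not_le.mpr h]
        rw [hs, abs_of_neg (by linarith)]; ring
    rw [key]
    have := mul_le_mul_of_nonneg_left hω.le hnpos.le
    linarith
  -- union bound
  have hB : ∀ s : α → Bool, μ (B s) ≤ ENNReal.ofReal (Real.exp (-C)) := fun s => by
    rw [← ENNReal.ofReal_toReal (measure_ne_top μ _)]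
    exact ENNReal.ofReal_le_ofReal (hcher s)
  have hfinal : 2 ^ S * Real.exp (-C) ≤ δ := by
    have hexp : Real.exp (-C) = (5 ^ S : ℝ)⁻¹ * δ := by
      rw [hCdef, neg_add, Real.exp_add]
      congr 1
      · rw [Real.exp_neg, Real.exp_nat_mul, Real.exp_log (by norm_num : (0:ℝ) < 5)]
      · rw [Real.exp_neg, Real.exp_log (by positivity), one_div, inv_inv]
    rw [hexp]
    rw [← mul_assoc]
    have h25 : (2:ℝ) ^ S * ((5:ℝ) ^ S)⁻¹ ≤ 1 := by
      have h5 : (0:ℝ) < (5:ℝ) ^ S := by positivity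
      rw [← div_eq_mul_inv, div_le_one h5]
      exact pow_le_pow_left₀ (by norm_num) (by norm_num) S
    nlinarith
  have hcomp : μ {ω : Fin n → α |
      ∑ x : α, |((Finset.univ.filter fun i : Fin n => ω i = x).card : ℝ) / (n : ℝ) - p x|
        ≤ 2 * t}ᶜ ≤ ENNReal.ofReal δ := by
    calc μ _ ≤ μ (⋃ s : α → Bool, B s) := measure_mono hsub
      _ ≤ ∑' s : α → Bool, μ (B s) := measure_iUnion_le _
      _ ≤ ∑' _s : α → Bool, ENNReal.ofReal (Real.exp (-C)) := ENNReal.tsum_le_tsum hB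
      _ = (Fintype.card (α → Bool)) * ENNReal.ofReal (Real.exp (-C)) := by
          rw [tsum_fintype, Finset.sum_const, Finset.card_univ, nsmul_eq_mul]
      _ = ENNReal.ofReal ((2:ℝ) ^ S * Real.exp (-C)) := by
          rw [ENNReal.ofReal_mul (by positivity)]
          congr 1
          rw [Fintype.card_fun, Fintype.card_bool, hcard]
          simp [ENNReal.ofReal_pow]
      _ ≤ ENNReal.ofReal δ := ENNReal.ofReal_le_ofReal hfinal
  have hmeasE : MeasurableSet {ω : Fin n → α |
      ∑ x : α, |((Finset.univ.filter fun i : Fin n => ω i = x).card : ℝ) / (n : ℝ) - p x|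
        ≤ 2 * t} := (Set.toFinite _).measurableSet
  have hsplit := measure_add_measure_compl (μ := μ) hmeasE
  rw [measure_univ] at hsplit
  have h1le : (1:ENNReal) ≤ μ {ω : Fin n → α |
      ∑ x : α, |((Finset.univ.filter fun i : Fin n => ω i = x).card : ℝ) / (n : ℝ) - p x|
        ≤ 2 * t} + ENNReal.ofReal δ := by
    rw [← hsplit]
    exact add_le_add_right hcomp _
  have : ENNReal.ofReal (1 - δ) = 1 - ENNReal.ofReal δ := by
    rw [ENNReal.ofReal_sub _ hδ0.le, ENNReal.ofReal_one]
  rw [this]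
  exact tsub_le_iff_right.2 h1le
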